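/- arXiv:2602.01346 — 2 statements merged into one kernel-verified Lean document; each statement's English description precedes it below -/
import Mathlib

section
/- (Tail Mass Bound.) Let u ∈ ℝ^d with sorted entries u_(1) ≥ … ≥ u_(d), let 1 ≤ k < d, and suppose the gap Δ_k = u_(k) − u_(k+1) is strictly positive. Let S = S_k(u) be the salient set and let α be the softmax of ηu for η > 0. Then the tail mass satisfies t = Σ_{i ∉ S} α_i ≤ ((d − k)/k) · exp(−η Δ_k). -/
open Finset Real

/-- **Tail Mass Bound.** Let `u ∈ ℝ^d` with decreasingly sorted
entries given by `v` (a rearrangement of `u` along a permutation `e`), let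
`1 ≤ k < d` with gap `Δ_k = u_(k) − u_(k+1) > 0`, let `S = S_k(u)` be the
salient set and `α` the softmax of `ηu` for `η > 0`. Then the tail mass
satisfies `t = ∑_{i ∉ S} α_i ≤ ((d − k)/k) · exp(−η Δ_k)`. -/
theorem softmax_tail_mass_bound (d k : ℕ) (hk1 : 1 ≤ k) (hkd : k < d)
    (u v : Fin d → ℝ) (e : Equiv.Perm (Fin d))
    (hv : ∀ i, v i = u (e i))
    (hsorted : ∀ i j : Fin d, i ≤ j → v j ≤ v i)
    (hgap : 0 < v ⟨k - 1, by omega⟩ - v ⟨k, hkd⟩)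
    (η : ℝ) (hη : 0 < η)
    (α : Fin d → ℝ)
    (hα : ∀ i, α i = Real.exp (η * u i) / ∑ j, Real.exp (η * u j)) :
    ∑ i ∈ Finset.univ \ Finset.univ.filter (fun i => v ⟨k - 1, by omega⟩ ≤ u i),
        α i ≤
      (((d : ℝ) - k) / k) *
        Real.exp (-η * (v ⟨k - 1, by omega⟩ - v ⟨k, hkd⟩)) := by
  set τ : ℝ := v ⟨k - 1, by omega⟩ with hτ
  set w : ℝ := v ⟨k, hkd⟩ with hw
  set Z : ℝ := ∑ j, Real.exp (η * u j) with hZ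
  have hZpos : 0 < Z := Finset.sum_pos (fun j _ => Real.exp_pos _)
    ⟨⟨0, by omega⟩, Finset.mem_univ _⟩
  set S : Finset (Fin d) := Finset.univ.filter (fun i => τ ≤ u i) with hS
  set T : Finset (Fin d) := Finset.univ \ S with hT
  -- the salient set has at least k elements
  have hScard : k ≤ S.card := by
    have := Finset.card_le_card_of_injOn (f := fun j : Fin k => e ⟨j, by omega⟩)
      (s := Finset.univ) (t := S)
      (by
        intro j _
        simp only [hS, Finset.mem_coe, Finset.mem_filter, Finset.mem_univ, true_and]
        have h1 : (⟨(j : ℕ), by omega⟩ : Fin d) ≤ ⟨(j : ℕ), by omega⟩ := le_refl _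
        have h2 : τ ≤ v ⟨(j : ℕ), by omega⟩ := by
          rw [hτ]
          exact hsorted ⟨(j : ℕ), by omega⟩ ⟨k - 1, by omega⟩
            (Fin.mk_le_mk.mpr (by omega))
        calc τ ≤ v ⟨(j : ℕ), by omega⟩ := h2
          _ = u (e ⟨(j : ℕ), by omega⟩) := hv _)
      (by
        intro a _ b _ hab
        have := e.injective hab
        exact Fin.ext (by simpa [Fin.mk.injEq] using congrArg Fin.val this))
    simpa using this
  have hTcard : T.card ≤ d - k := by
    have : T.card = d - S.card := by
      rw [hT, Finset.card_sdiff_of_subset (Finset.subset_univ _)]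
      simp
    omega
  -- each tail element has value at most w
  have htail : ∀ i ∈ T, u i ≤ w := by
    intro i hi
    have hnot : ¬ τ ≤ u i := by
      simp only [hT, hS, Finset.mem_sdiff, Finset.mem_filter, Finset.mem_univ,
        true_and] at hi
      exact hi
    set j := e.symm i with hj
    have huv : u i = v j := by rw [hv, hj, Equiv.apply_symm_apply]
    have hjk : k ≤ (j : ℕ) := by
      by_contra hlt
      push_neg at hlt
      have : τ ≤ v j := by
        rw [hτ]
        exact hsorted j ⟨k - 1, by omega⟩ (by rw [Fin.le_def]; simpa using (by omega : (j:ℕ) ≤ k - 1))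
      exact hnot (huv ▸ this)
    have : v j ≤ w := hsorted ⟨k, hkd⟩ j (by rw [Fin.le_def]; simpa using hjk)
    exact huv ▸ this
  -- numerator bound
  have hA : ∑ i ∈ T, Real.exp (η * u i) ≤ ((d : ℝ) - k) * Real.exp (η * w) := by
    calc ∑ i ∈ T, Real.exp (η * u i)
        ≤ ∑ i ∈ T, Real.exp (η * w) := by
          apply Finset.sum_le_sum
          intro i hi
          exact Real.exp_le_exp.mpr (by
            have := htail i hi
            nlinarith)
      _ = (T.card : ℝ) * Real.exp (η * w) := by
          rw [Finset.sum_const, nsmul_eq_mul]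
      _ ≤ ((d : ℝ) - k) * Real.exp (η * w) := by
          apply mul_le_mul_of_nonneg_right _ (Real.exp_pos _).le
          have : (T.card : ℝ) ≤ ((d - k : ℕ) : ℝ) := by exact_mod_cast hTcard
          calc (T.card : ℝ) ≤ ((d - k : ℕ) : ℝ) := this
            _ = (d : ℝ) - k := by
              push_cast [Nat.cast_sub hkd.le]
              ring
  -- denominator bound
  have hZlb : (k : ℝ) * Real.exp (η * τ) ≤ Z := by
    calc (k : ℝ) * Real.exp (η * τ) ≤ (S.card : ℝ) * Real.exp (η * τ) := by
          apply mul_le_mul_of_nonneg_right _ (Real.exp_pos _).le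
          exact_mod_cast hScard
      _ = ∑ i ∈ S, Real.exp (η * τ) := by rw [Finset.sum_const, nsmul_eq_mul]
      _ ≤ ∑ i ∈ S, Real.exp (η * u i) := by
          apply Finset.sum_le_sum
          intro i hi
          simp only [hS, Finset.mem_filter] at hi
          exact Real.exp_le_exp.mpr (by nlinarith [hi.2])
      _ ≤ Z := Finset.sum_le_sum_of_subset_of_nonneg (Finset.subset_univ _)
          (fun _ _ _ => (Real.exp_pos _).le)
  have hsum : ∑ i ∈ T, α i = (∑ i ∈ T, Real.exp (η * u i)) / Z := by
    rw [Finset.sum_div]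
    exact Finset.sum_congr rfl (fun i _ => hα i)
  rw [hsum]
  have hkpos : (0 : ℝ) < k := by exact_mod_cast hk1
  have key : (∑ i ∈ T, Real.exp (η * u i)) / Z ≤
      (((d : ℝ) - k) * Real.exp (η * w)) / ((k : ℝ) * Real.exp (η * τ)) := by
    have hdk : (0 : ℝ) ≤ (d : ℝ) - k := by
      have : (k : ℝ) ≤ d := by exact_mod_cast hkd.le
      linarith
    exact div_le_div₀ (mul_nonneg hdk (Real.exp_pos _).le) hA (by positivity) hZlb
  refine key.trans (le_of_eq ?_)
  rw [show -η * (τ - w) = η * w - η * τ by ring, Real.exp_sub]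
  field_simp
end

section
/- (Completeness of layer conductance.) Let h : ℝ^n → ℝ^m and G : ℝ^m → ℝ be continuously differentiable, and set F = G ∘ h. Fix x, x' ∈ ℝ^n and let γ(α) = x' + α(x − x') for α ∈ [0,1]. Then Σ_{j=1}^m ∫_0^1 (∂G/∂y_j)(h(γ(α))) · (d/dα)[h_j(γ(α))] dα = F(x) − F(x'); that is, the block conductances sum to the total change of the output along the straight-line path from the baseline x' to the input x. -/
open Finset Real MeasureTheory intervalIntegral

/-- **Completeness of layer conductance.** For continuously
differentiable `h : ℝ^n → ℝ^m` and `G : ℝ^m → ℝ` with `F = G ∘ h`, input `x`,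
baseline `x'`, and straight-line path `γ(α) = x' + α(x − x')`, the block
conductances `∫_0^1 (∂G/∂y_j)(h(γ(α))) · (d/dα)[h_j(γ(α))] dα` sum over `j`
to `F(x) − F(x')`. -/
theorem layer_conductance_completeness (n m : ℕ)
    (h : (Fin n → ℝ) → (Fin m → ℝ)) (G : (Fin m → ℝ) → ℝ)
    (hh : ContDiff ℝ 1 h) (hG : ContDiff ℝ 1 G)
    (x x' : Fin n → ℝ) :
    ∑ j : Fin m, ∫ α in (0:ℝ)..1,
        (fderiv ℝ G (h (x' + α • (x - x')))) (Pi.single j 1) *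
          deriv (fun a : ℝ => h (x' + a • (x - x')) j) α =
      G (h x) - G (h x') := by
  set g : ℝ → (Fin m → ℝ) := fun a => h (x' + a • (x - x')) with hg_def
  have hγ : ContDiff ℝ 1 (fun a : ℝ => x' + a • (x - x')) :=
    contDiff_const.add (contDiff_id.smul contDiff_const)
  have hg : ContDiff ℝ 1 g := hh.comp hγ
  have hgd : Differentiable ℝ g := hg.differentiable one_ne_zero
  -- coordinate derivative equals coordinate of derivative
  have hcoord : ∀ (j : Fin m) (α : ℝ),
      deriv (fun a : ℝ => g a j) α = deriv g α j := by
    intro j α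
    have h1 : HasDerivAt g (deriv g α) α := (hgd α).hasDerivAt
    have h2 : HasDerivAt (fun a : ℝ => g a j) (deriv g α j) α := by
      have := (ContinuousLinearMap.proj (R := ℝ) (φ := fun _ : Fin m => ℝ) j).hasFDerivAt.comp_hasDerivAt α h1
      exact this
    exact h2.deriv
  -- derivative of composite
  have hcomp : ∀ α : ℝ, HasDerivAt (fun a => G (g a))
      ((fderiv ℝ G (g α)) (deriv g α)) α := by
    intro α
    exact ((hG.differentiable one_ne_zero (g α)).hasFDerivAt).comp_hasDerivAt α (hgd α).hasDerivAt
  -- continuity of integrand pieces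
  have hcont_dg : Continuous (deriv g) := hg.continuous_deriv le_rfl
  have hcont_fd : Continuous (fun α => fderiv ℝ G (g α)) :=
    (hG.continuous_fderiv one_ne_zero).comp hg.continuous
  have hci : ∀ j : Fin m, Continuous (fun α =>
      (fderiv ℝ G (g α)) (Pi.single j 1) * deriv g α j) := by
    intro j
    exact (hcont_fd.clm_apply continuous_const).mul ((continuous_apply j).comp hcont_dg)
  have hint : ∀ j : Fin m, IntervalIntegrable (fun α =>
      (fderiv ℝ G (g α)) (Pi.single j 1) * deriv g α j) volume 0 1 :=
    fun j => (hci j).intervalIntegrable 0 1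
  calc
    ∑ j : Fin m, ∫ α in (0:ℝ)..1,
        (fderiv ℝ G (g α)) (Pi.single j 1) * deriv (fun a : ℝ => g a j) α
      = ∑ j : Fin m, ∫ α in (0:ℝ)..1,
        (fderiv ℝ G (g α)) (Pi.single j 1) * deriv g α j := by
          refine Finset.sum_congr rfl fun j _ => ?_
          simp only [hcoord]
    _ = ∫ α in (0:ℝ)..1, ∑ j : Fin m,
        (fderiv ℝ G (g α)) (Pi.single j 1) * deriv g α j :=
          (intervalIntegral.integral_finset_sum (fun j _ => hint j)).symm
    _ = ∫ α in (0:ℝ)..1, (fderiv ℝ G (g α)) (deriv g α) := by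
          refine intervalIntegral.integral_congr fun α _ => ?_
          have : deriv g α = ∑ j : Fin m, deriv g α j • (Pi.single j 1 : Fin m → ℝ) := by
            ext i
            simp [Finset.sum_apply, Pi.single_apply, mul_comm]
          conv_rhs => rw [this]
          rw [map_sum]
          refine Finset.sum_congr rfl fun j _ => ?_
          rw [(fderiv ℝ G (g α)).map_smul]
          simp [mul_comm]
    _ = G (g 1) - G (g 0) := by
          refine intervalIntegral.integral_eq_sub_of_hasDerivAt
            (fun α _ => hcomp α) ?_
          exact ((hcont_fd.clm_apply hcont_dg)).intervalIntegrable 0 1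
    _ = G (h x) - G (h x') := by simp [hg_def]
end
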